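/- arXiv:1802.08445 — 4 statements merged into one kernel-verified Lean document; each statement's English description precedes it below -/
import Mathlib

section
/- Let F = ⟨A, R, W, S⟩ be a semiring-based weighted argumentation framework over an absorptive c-semiring S, and let Z ⊆ A be w-conflict-free. Then Z is w-admissible if and only if for every j ∈ A \ Z, ⊗_{i ∈ Z} W(i, j) ≤_S ⊗_{i ∈ Z} W(j, i). -/
open Finset

variable {A : Type*} [Fintype A] [DecidableEq A] {S : Type*} [CommSemiring S]

/-- The order induced by the idempotent addition of a c-semiring: `a ≤ₛ b` iff `a + b = b`. -/
def sLE (a b : S) : Prop := a + b = b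

/-- The attack weight `W(B, D)` from a set of arguments `B` to a set `D`:
the semiring product of all pairwise weights. -/
def Wsets (W : A → A → S) (B D : Finset A) : S := ∏ b ∈ B, ∏ d ∈ D, W b d

/-- `B` is w-conflict-free iff `W(B, B) = ⊤` (here `⊤` is the multiplicative unit `1`). -/
def wConflictFree (W : A → A → S) (B : Finset A) : Prop := Wsets W B B = 1

/-- Within the framework whose set of arguments is `U`, the set `B` w-defends `b`:
for every attacker `a ∈ U` of `b` (i.e. `W a b ≠ ⊤`), `W(a, B ∪ {b}) ≥ₛ W(B, a)`. -/
def wDefendsIn (W : A → A → S) (U B : Finset A) (b : A) : Prop :=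
  ∀ a ∈ U, W a b ≠ 1 → sLE (Wsets W B {a}) (Wsets W {a} (insert b B))

/-- `B` is w-admissible in the framework with argument set `U`:
`B ⊆ U`, `B` is w-conflict-free, and `B` w-defends each of its members. -/
def wAdmissibleIn (W : A → A → S) (U B : Finset A) : Prop :=
  B ⊆ U ∧ wConflictFree W B ∧ ∀ b ∈ B, wDefendsIn W U B b

/-- `B` is a w-stable extension: w-admissible and every argument of `U` outside `B`
is attacked by some member of `B`. -/
def wStableIn (W : A → A → S) (U B : Finset A) : Prop :=
  wAdmissibleIn W U B ∧ ∀ a ∈ U, a ∉ B → ∃ b ∈ B, W b a ≠ 1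

/-- `B` is a w-complete extension: w-admissible and it contains every argument `b`
such that `B ∪ {b}` is w-admissible. -/
def wCompleteIn (W : A → A → S) (U B : Finset A) : Prop :=
  wAdmissibleIn W U B ∧ ∀ b ∈ U, wAdmissibleIn W U (insert b B) → b ∈ B

/-- `B` is a w-preferred extension: a ⊆-maximal w-admissible subset. -/
def wPreferredIn (W : A → A → S) (U B : Finset A) : Prop :=
  wAdmissibleIn W U B ∧ ∀ C : Finset A, wAdmissibleIn W U C → B ⊆ C → C = B

/-- A w-conflict-free subset Z is w-admissible iff for every j ∉ Z,
⊗_{i ∈ Z} W(i,j) ≤ₛ ⊗_{i ∈ Z} W(j,i). -/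
theorem wAdmissible_iff_subblocks (W : A → A → S)
    (hadd : ∀ s : S, s + s = s) (habs : ∀ s t : S, s + s * t = s)
    (Z : Finset A) (hcf : wConflictFree W Z) :
    wAdmissibleIn W Finset.univ Z ↔
      ∀ j : A, j ∉ Z → sLE (∏ i ∈ Z, W i j) (∏ i ∈ Z, W j i) := by
  have le_one : ∀ x : S, sLE x 1 := fun x => by
    have := habs 1 x; simpa [sLE, add_comm] using this
  have fac : ∀ x y : S, x * y = 1 → x = 1 := by
    intro x y hxy
    have h1 : x + 1 = x := by have := habs x y; rwa [hxy] at this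
    have h2 : x + 1 = 1 := le_one x
    rw [← h1, h2]
  constructor
  · rintro ⟨-, -, hdef⟩ j hj
    by_cases h : ∃ b ∈ Z, W j b ≠ 1
    · obtain ⟨b, hb, hWb⟩ := h
      have := hdef b hb j (mem_univ j) hWb
      simpa [Wsets, Finset.insert_eq_self.mpr hb] using this
    · push_neg at h
      have h1 : ∏ i ∈ Z, W j i = 1 := Finset.prod_eq_one fun i hi => h i hi
      rw [h1]; exact le_one _
  · intro h
    refine ⟨subset_univ _, hcf, ?_⟩
    intro b hb a _ hWa
    have haZ : a ∉ Z := by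
      intro haZ
      apply hWa
      have h1 := hcf
      unfold wConflictFree Wsets at h1
      rw [← Finset.mul_prod_erase Z _ haZ, ← Finset.mul_prod_erase Z (W a) hb,
        mul_assoc] at h1
      exact fac _ _ h1
    have := h a haZ
    simpa [Wsets, Finset.insert_eq_self.mpr hb] using this
end

section
/- Let F = ⟨A, R, W, S⟩ be a semiring-based weighted argumentation framework over an absorptive c-semiring S, let Z ⊆ A be w-conflict-free, and fix z ∈ Z. Define the reduced WAF F' on A' = {z} ∪ (A \ Z) by W'(z, j) = ⊗_{i ∈ Z} W(i, j) and W'(j, z) = ⊗_{i ∈ Z} W(j, i) for j ∈ A \ Z, W'(j, j') = W(j, j') for j, j' ∈ A \ Z, and W'(z, z) = ⊤. Then Z is w-admissible in F if and only if {z} is w-admissible in F'. -/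
open Finset

variable {A : Type*} [Fintype A] [DecidableEq A] {S : Type*} [CommSemiring S]

/-- Matrix reduction by contraction of a w-conflict-free set Z into a single
argument z ∈ Z: Z is w-admissible in F iff {z} is w-admissible in the reduced framework F',
whose argument set is {z} ∪ (A \ Z) and whose weights W' are obtained by
combining the rows and columns of Z. -/
theorem contraction_preserves_admissible (W : A → A → S)
    (hadd : ∀ s : S, s + s = s) (habs : ∀ s t : S, s + s * t = s)
    (Z : Finset A) (hcf : wConflictFree W Z) (z : A) (hz : z ∈ Z)
    (W' : A → A → S)
    (hW'zj : ∀ j ∉ Z, W' z j = ∏ i ∈ Z, W i j)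
    (hW'jz : ∀ j ∉ Z, W' j z = ∏ i ∈ Z, W j i)
    (hW'jj : ∀ j ∉ Z, ∀ j' ∉ Z, W' j j' = W j j')
    (hW'zz : W' z z = 1) :
    wAdmissibleIn W Finset.univ Z ↔
      wAdmissibleIn W' (insert z (Finset.univ \ Z)) {z} := by
  have mul_eq_one_left : ∀ x y : S, x * y = 1 → x = 1 := by
    intro x y h
    have h1 : x + 1 = x := by have := habs x y; rwa [h] at this
    have h2 : (1 : S) + x = 1 := by have := habs 1 x; rwa [one_mul] at this
    calc x = x + 1 := h1.symm
      _ = 1 + x := add_comm _ _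
      _ = 1 := h2
  have prod_factor : ∀ (s : Finset A) (f : A → S), ∏ i ∈ s, f i = 1 →
      ∀ i ∈ s, f i = 1 := by
    intro s f h i hi
    rw [← Finset.mul_prod_erase s f hi] at h
    exact mul_eq_one_left _ _ h
  have hcfone : ∀ a ∈ Z, ∀ b ∈ Z, W a b = 1 := by
    intro a ha b hb
    exact prod_factor Z _ (prod_factor Z _ hcf a ha) b hb
  constructor
  · rintro ⟨-, -, hdef⟩
    refine ⟨Finset.singleton_subset_iff.mpr (Finset.mem_insert_self _ _), ?_, ?_⟩
    · unfold wConflictFree Wsets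
      simp [hW'zz]
    · intro b hb
      rw [Finset.mem_singleton] at hb; rw [hb]
      intro a ha hne
      rcases Finset.mem_insert.mp ha with rfl | ha
      · exact absurd hW'zz hne
      · have haZ : a ∉ Z := (Finset.mem_sdiff.mp ha).2
        have hprod : W' a z = ∏ i ∈ Z, W a i := hW'jz a haZ
        have hex : ∃ b ∈ Z, W a b ≠ 1 := by
          by_contra h
          push_neg at h
          exact hne (hprod.trans (Finset.prod_eq_one h))
        obtain ⟨b, hbZ, hWab⟩ := hex
        have hd := hdef b hbZ a (Finset.mem_univ a) hWab
        unfold sLE Wsets at hd ⊢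
        simp only [Finset.prod_singleton, Finset.insert_eq_self.mpr hbZ] at hd
        have hzz : insert z ({z} : Finset A) = {z} :=
          Finset.insert_eq_self.mpr (Finset.mem_singleton_self z)
        simp only [Finset.prod_singleton, hzz]
        rw [hW'zj a haZ, hW'jz a haZ]
        exact hd
  · rintro ⟨-, -, hdef⟩
    refine ⟨Finset.subset_univ Z, hcf, ?_⟩
    intro b hb a _ hWab
    have haZ : a ∉ Z := fun haZ => hWab (hcfone a haZ b hb)
    have hne : W' a z ≠ 1 := by
      rw [hW'jz a haZ]
      intro h
      exact hWab (prod_factor Z _ h b hb)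
    have hd := hdef z (Finset.mem_singleton_self z) a
      (Finset.mem_insert_of_mem (Finset.mem_sdiff.mpr ⟨Finset.mem_univ a, haZ⟩)) hne
    unfold sLE Wsets at hd ⊢
    have hzz : insert z ({z} : Finset A) = {z} :=
      Finset.insert_eq_self.mpr (Finset.mem_singleton_self z)
    simp only [Finset.prod_singleton, hzz] at hd
    rw [hW'zj a haZ, hW'jz a haZ] at hd
    simp only [Finset.prod_singleton, Finset.insert_eq_self.mpr hb]
    exact hd
end

section
/- Let F = ⟨A, R, W, S⟩ be a semiring-based weighted argumentation framework over an absorptive c-semiring S, let Z ⊆ A be w-conflict-free, and fix z ∈ Z. Define the reduced WAF F' on A' = {z} ∪ (A \ Z) by W'(z, j) = ⊗_{i ∈ Z} W(i, j) and W'(j, z) = ⊗_{i ∈ Z} W(j, i) for j ∈ A \ Z, W'(j, j') = W(j, j') for j, j' ∈ A \ Z, and W'(z, z) = ⊤. Then Z is a w-stable extension of F if and only if {z} is a w-stable extension of F'. -/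
open Finset

variable {A : Type*} [Fintype A] [DecidableEq A] {S : Type*} [CommSemiring S]

lemma sLE_antisymm' {a b : S} (h1 : sLE a b) (h2 : sLE b a) : a = b := by
  unfold sLE at h1 h2
  calc a = b + a := h2.symm
    _ = a + b := add_comm _ _
    _ = b := h1

lemma sLE_one (habs : ∀ s t : S, s + s * t = s) (t : S) : sLE t 1 := by
  have h := habs 1 t
  rw [one_mul] at h
  unfold sLE
  rw [add_comm]
  exact h

lemma sLE_mul_left (habs : ∀ s t : S, s + s * t = s) (a b : S) : sLE (a * b) a := by
  unfold sLE
  rw [add_comm]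
  exact habs a b

lemma prod_eq_one_forall (habs : ∀ s t : S, s + s * t = s) {ι : Type*} [DecidableEq ι] {s : Finset ι}
    {f : ι → S} (h : ∏ i ∈ s, f i = 1) : ∀ i ∈ s, f i = 1 := by
  intro i hi
  have h1 : f i * ∏ j ∈ s.erase i, f j = 1 := by
    rw [Finset.mul_prod_erase _ _ hi, h]
  have h2 := sLE_mul_left habs (f i) (∏ j ∈ s.erase i, f j)
  rw [h1] at h2
  exact sLE_antisymm' (sLE_one habs (f i)) h2

lemma prod_ne_one_iff (habs : ∀ s t : S, s + s * t = s) {ι : Type*} [DecidableEq ι] {s : Finset ι}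
    {f : ι → S} : (∏ i ∈ s, f i ≠ 1) ↔ ∃ i ∈ s, f i ≠ 1 := by
  constructor
  · intro h
    by_contra hc
    push_neg at hc
    exact h (Finset.prod_eq_one hc)
  · rintro ⟨i, hi, hne⟩ h
    exact hne (prod_eq_one_forall habs h i hi)

/-- Matrix reduction by contraction of a w-conflict-free set Z into a single
argument z ∈ Z: Z is a w-stable extension in F iff {z} is a w-stable extension in the reduced framework F',
whose argument set is {z} ∪ (A \ Z) and whose weights W' are obtained by
combining the rows and columns of Z. -/
theorem contraction_preserves_stable (W : A → A → S)
    (hadd : ∀ s : S, s + s = s) (habs : ∀ s t : S, s + s * t = s)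
    (Z : Finset A) (hcf : wConflictFree W Z) (z : A) (hz : z ∈ Z)
    (W' : A → A → S)
    (hW'zj : ∀ j ∉ Z, W' z j = ∏ i ∈ Z, W i j)
    (hW'jz : ∀ j ∉ Z, W' j z = ∏ i ∈ Z, W j i)
    (hW'jj : ∀ j ∉ Z, ∀ j' ∉ Z, W' j j' = W j j')
    (hW'zz : W' z z = 1) :
    wStableIn W Finset.univ Z ↔
      wStableIn W' (insert z (Finset.univ \ Z)) {z} := by
  -- every weight inside Z is 1
  have hZ1 : ∀ b ∈ Z, ∀ d ∈ Z, W b d = 1 := by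
    intro b hb d hd
    have h1 : ∏ d ∈ Z, W b d = 1 :=
      prod_eq_one_forall habs (hcf : ∏ b ∈ Z, ∏ d ∈ Z, W b d = 1) b hb
    exact prod_eq_one_forall habs h1 d hd
  have hWZa : ∀ a : A, Wsets W Z {a} = ∏ i ∈ Z, W i a := by
    intro a; simp [Wsets]
  have hWaZ : ∀ a : A, Wsets W {a} Z = ∏ i ∈ Z, W a i := by
    intro a; simp [Wsets]
  have hW'za : ∀ a : A, Wsets W' {z} {a} = W' z a := by
    intro a; simp [Wsets]
  have hW'az : ∀ a : A, Wsets W' {a} (insert z {z}) = W' a z := by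
    intro a; simp [Wsets]
  constructor
  · rintro ⟨⟨-, -, hdef⟩, hstab⟩
    refine ⟨⟨Finset.singleton_subset_iff.mpr (Finset.mem_insert_self _ _), ?_, ?_⟩, ?_⟩
    · simp [wConflictFree, Wsets, hW'zz]
    · intro b hb
      rw [Finset.mem_singleton] at hb
      subst hb
      intro a ha hne
      rcases Finset.mem_insert.mp ha with rfl | ha
      · exact absurd hW'zz hne
      · have haZ : a ∉ Z := (Finset.mem_sdiff.mp ha).2
        rw [hW'jz a haZ] at hne
        obtain ⟨i, hi, hine⟩ := (prod_ne_one_iff habs).mp hne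
        have := hdef i hi a (Finset.mem_univ a) hine
        rw [Finset.insert_eq_self.mpr hi] at this
        rw [hW'za, hW'az, hW'zj a haZ, hW'jz a haZ, ← hWZa, ← hWaZ]
        exact this
    · intro a ha hane
      rw [Finset.mem_singleton] at hane
      rcases Finset.mem_insert.mp ha with rfl | ha
      · exact absurd rfl hane
      · have haZ : a ∉ Z := (Finset.mem_sdiff.mp ha).2
        obtain ⟨b, hb, hbne⟩ := hstab a (Finset.mem_univ a) haZ
        refine ⟨z, Finset.mem_singleton_self z, ?_⟩
        rw [hW'zj a haZ]
        exact (prod_ne_one_iff habs).mpr ⟨b, hb, hbne⟩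
  · rintro ⟨⟨-, -, hdef'⟩, hstab'⟩
    refine ⟨⟨Finset.subset_univ Z, hcf, ?_⟩, ?_⟩
    · intro b hb a ha hne
      have haZ : a ∉ Z := fun haZ => hne (hZ1 a haZ b hb)
      have hprod : W' a z ≠ 1 := by
        rw [hW'jz a haZ]
        exact (prod_ne_one_iff habs).mpr ⟨b, hb, hne⟩
      have haU : a ∈ insert z (Finset.univ \ Z) :=
        Finset.mem_insert.mpr (Or.inr (Finset.mem_sdiff.mpr ⟨Finset.mem_univ a, haZ⟩))
      have := hdef' z (Finset.mem_singleton_self z) a haU hprod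
      rw [hW'za, hW'az, hW'zj a haZ, hW'jz a haZ, ← hWZa, ← hWaZ] at this
      rw [Finset.insert_eq_self.mpr hb]
      exact this
    · intro a _ haZ
      have haU : a ∈ insert z (Finset.univ \ Z) :=
        Finset.mem_insert.mpr (Or.inr (Finset.mem_sdiff.mpr ⟨Finset.mem_univ a, haZ⟩))
      have hane : a ∉ ({z} : Finset A) := by
        rw [Finset.mem_singleton]
        rintro rfl
        exact haZ hz
      obtain ⟨b, hb, hbne⟩ := hstab' a haU hane
      rw [Finset.mem_singleton] at hb
      subst hb
      rw [hW'zj a haZ] at hbne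
      obtain ⟨i, hi, hine⟩ := (prod_ne_one_iff habs).mp hbne
      exact ⟨i, hi, hine⟩
end

section
/- Let F = ⟨A, R, W, S⟩ be a semiring-based weighted argumentation framework over an absorptive c-semiring S, let Z ⊆ A be w-conflict-free, and fix z ∈ Z. Define the reduced WAF F' on A' = {z} ∪ (A \ Z) by W'(z, j) = ⊗_{i ∈ Z} W(i, j) and W'(j, z) = ⊗_{i ∈ Z} W(j, i) for j ∈ A \ Z, W'(j, j') = W(j, j') for j, j' ∈ A \ Z, and W'(z, z) = ⊤. Then Z is a w-preferred extension of F if and only if {z} is a w-preferred extension of F'. -/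
open Finset

variable {A : Type*} [Fintype A] [DecidableEq A] {S : Type*} [CommSemiring S]

lemma aux_mul_eq_one_left {S : Type*} [CommSemiring S]
    (habs : ∀ s t : S, s + s * t = s) {x y : S} (h : x * y = 1) : x = 1 := by
  have h1 : 1 + x = x := by rw [← h, add_comm]; exact habs x y
  have h2 : x + 1 = 1 := by have := habs 1 x; rwa [one_mul, add_comm] at this
  rw [add_comm] at h1
  rw [← h1]; exact h2

lemma aux_prod_eq_one {ι : Type*} [DecidableEq ι] {S : Type*} [CommSemiring S]
    (habs : ∀ s t : S, s + s * t = s)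
    {s : Finset ι} {f : ι → S} (h : ∏ i ∈ s, f i = 1) : ∀ i ∈ s, f i = 1 := by
  induction s using Finset.induction with
  | empty => simp
  | insert _ _ hx ih =>
    rw [Finset.prod_insert hx] at h
    intro i hi
    rcases Finset.mem_insert.1 hi with rfl | hi
    · exact aux_mul_eq_one_left habs h
    · exact ih (aux_mul_eq_one_left habs (by rwa [mul_comm] at h)) i hi

lemma aux_key (W : A → A → S)
    (habs : ∀ s t : S, s + s * t = s)
    (Z : Finset A) (hcf : wConflictFree W Z) (z : A) (hz : z ∈ Z)
    (W' : A → A → S)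
    (hW'zj : ∀ j ∉ Z, W' z j = ∏ i ∈ Z, W i j)
    (hW'jz : ∀ j ∉ Z, W' j z = ∏ i ∈ Z, W j i)
    (hW'jj : ∀ j ∉ Z, ∀ j' ∉ Z, W' j j' = W j j')
    (hW'zz : W' z z = 1)
    (D : Finset A) (hDZ : ∀ d ∈ D, d ∉ Z) :
    wAdmissibleIn W Finset.univ (Z ∪ D) ↔
      wAdmissibleIn W' (insert z (Finset.univ \ Z)) (insert z D) := by
  have hzD : z ∉ D := fun h => hDZ z h hz
  have hdisj : Disjoint Z D := Finset.disjoint_left.2 fun a ha ha' => hDZ a ha' ha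
  -- (a) equality of the conflict products
  have hcfeq : Wsets W (Z ∪ D) (Z ∪ D) = Wsets W' (insert z D) (insert z D) := by
    unfold Wsets
    have hsplit : ∀ s : Finset A, ∏ b ∈ s, ∏ d ∈ Z ∪ D, W b d =
        (∏ b ∈ s, ∏ d ∈ Z, W b d) * ∏ b ∈ s, ∏ d ∈ D, W b d := by
      intro s
      rw [← Finset.prod_mul_distrib]
      exact Finset.prod_congr rfl fun b _ => Finset.prod_union hdisj
    have hZZ : ∏ b ∈ Z, ∏ d ∈ Z, W b d = 1 := hcf
    have e2 : ∏ b ∈ D, ∏ d ∈ insert z D, W' b d =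
        (∏ b ∈ D, ∏ i ∈ Z, W b i) * ∏ b ∈ D, ∏ d ∈ D, W b d := by
      rw [← Finset.prod_mul_distrib]
      refine Finset.prod_congr rfl fun b hb => ?_
      rw [Finset.prod_insert hzD, hW'jz b (hDZ b hb)]
      congr 1
      exact Finset.prod_congr rfl fun d hd => hW'jj b (hDZ b hb) d (hDZ d hd)
    have e3 : ∏ d ∈ insert z D, W' z d = ∏ d ∈ D, ∏ i ∈ Z, W i d := by
      rw [Finset.prod_insert hzD, hW'zz, one_mul]
      exact Finset.prod_congr rfl fun d hd => hW'zj d (hDZ d hd)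
    rw [Finset.prod_union hdisj, hsplit Z, hsplit D, hZZ, one_mul,
      Finset.prod_insert hzD, e2, e3]
    rw [show (∏ d ∈ D, ∏ i ∈ Z, W i d) = ∏ i ∈ Z, ∏ d ∈ D, W i d from Finset.prod_comm]
  -- (b) equalities of attack values at an outside argument
  have hrow : ∀ a, a ∉ Z → a ∉ D →
      Wsets W' (insert z D) {a} = Wsets W (Z ∪ D) {a} := by
    intro a haZ haD
    unfold Wsets
    simp only [Finset.prod_singleton]
    rw [Finset.prod_insert hzD, Finset.prod_union hdisj, hW'zj a haZ]
    congr 1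
    exact Finset.prod_congr rfl fun d hd => hW'jj d (hDZ d hd) a haZ
  have hcol : ∀ a, a ∉ Z → a ∉ D →
      Wsets W' {a} (insert z D) = Wsets W {a} (Z ∪ D) := by
    intro a haZ haD
    unfold Wsets
    simp only [Finset.prod_singleton]
    rw [Finset.prod_insert hzD, Finset.prod_union hdisj, hW'jz a haZ]
    congr 1
    exact Finset.prod_congr rfl fun d hd => hW'jj a haZ d (hDZ d hd)
  constructor
  · rintro ⟨-, hBcf, hBdef⟩
    have hBcf' : wConflictFree W' (insert z D) := by
      unfold wConflictFree; rw [← hcfeq]; exact hBcf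
    refine ⟨?_, hBcf', ?_⟩
    · intro x hx
      rcases Finset.mem_insert.1 hx with rfl | hxD
      · exact Finset.mem_insert_self _ _
      · exact Finset.mem_insert_of_mem (Finset.mem_sdiff.2 ⟨Finset.mem_univ _, hDZ x hxD⟩)
    · intro b hb a ha hatt
      have hB'1 : ∀ p ∈ insert z D, ∀ q ∈ insert z D, W' p q = 1 :=
        fun p hp q hq => aux_prod_eq_one habs (aux_prod_eq_one habs hBcf' p hp) q hq
      by_cases haB' : a ∈ insert z D
      · exact absurd (hB'1 a haB' b hb) hatt
      have haz : a ≠ z := fun h => haB' (h ▸ Finset.mem_insert_self _ _)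
      have haZ : a ∉ Z := by
        rcases Finset.mem_insert.1 ha with rfl | h
        · exact absurd rfl haz
        · exact (Finset.mem_sdiff.1 h).2
      have haD : a ∉ D := fun h => haB' (Finset.mem_insert_of_mem h)
      rw [Finset.insert_eq_self.2 hb]
      unfold sLE
      rw [hrow a haZ haD, hcol a haZ haD]
      rcases Finset.mem_insert.1 hb with rfl | hbD
      · have hex : ¬ ∀ i ∈ Z, W a i = 1 := by
          intro h
          exact hatt (by rw [hW'jz a haZ]; exact Finset.prod_eq_one h)
        push_neg at hex
        obtain ⟨i, hi, hWi⟩ := hex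
        have := hBdef i (Finset.mem_union_left _ hi) a (Finset.mem_univ a) hWi
        rwa [Finset.insert_eq_self.2 (Finset.mem_union_left _ hi)] at this
      · have hW : W a b ≠ 1 := by rwa [hW'jj a haZ b (hDZ b hbD)] at hatt
        have := hBdef b (Finset.mem_union_right _ hbD) a (Finset.mem_univ a) hW
        rwa [Finset.insert_eq_self.2 (Finset.mem_union_right _ hbD)] at this
  · rintro ⟨-, hBcf', hBdef'⟩
    have hBcf : wConflictFree W (Z ∪ D) := by
      unfold wConflictFree; rw [hcfeq]; exact hBcf'
    refine ⟨Finset.subset_univ _, hBcf, ?_⟩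
    intro b hb a _ hatt
    have hB1 : ∀ p ∈ Z ∪ D, ∀ q ∈ Z ∪ D, W p q = 1 :=
      fun p hp q hq => aux_prod_eq_one habs (aux_prod_eq_one habs hBcf p hp) q hq
    by_cases haB : a ∈ Z ∪ D
    · exact absurd (hB1 a haB b hb) hatt
    have haZ : a ∉ Z := fun h => haB (Finset.mem_union_left _ h)
    have haD : a ∉ D := fun h => haB (Finset.mem_union_right _ h)
    have haU' : a ∈ insert z (Finset.univ \ Z) :=
      Finset.mem_insert_of_mem (Finset.mem_sdiff.2 ⟨Finset.mem_univ a, haZ⟩)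
    rw [Finset.insert_eq_self.2 hb]
    unfold sLE
    rw [← hrow a haZ haD, ← hcol a haZ haD]
    rcases Finset.mem_union.1 hb with hbZ | hbD
    · have hatt' : W' a z ≠ 1 := by
        rw [hW'jz a haZ]
        intro h
        exact hatt (aux_prod_eq_one habs h b hbZ)
      have := hBdef' z (Finset.mem_insert_self _ _) a haU' hatt'
      rwa [Finset.insert_eq_self.2 (Finset.mem_insert_self _ _)] at this
    · have hatt' : W' a b ≠ 1 := by rwa [hW'jj a haZ b (hDZ b hbD)]
      have := hBdef' b (Finset.mem_insert_of_mem hbD) a haU' hatt'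
      rwa [Finset.insert_eq_self.2 (Finset.mem_insert_of_mem hbD)] at this

/-- Matrix reduction by contraction of a w-conflict-free set Z into a single
argument z ∈ Z: Z is a w-preferred extension in F iff {z} is a w-preferred extension in the reduced framework F',
whose argument set is {z} ∪ (A \ Z) and whose weights W' are obtained by
combining the rows and columns of Z. -/
theorem contraction_preserves_preferred (W : A → A → S)
    (hadd : ∀ s : S, s + s = s) (habs : ∀ s t : S, s + s * t = s)
    (Z : Finset A) (hcf : wConflictFree W Z) (z : A) (hz : z ∈ Z)
    (W' : A → A → S)
    (hW'zj : ∀ j ∉ Z, W' z j = ∏ i ∈ Z, W i j)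
    (hW'jz : ∀ j ∉ Z, W' j z = ∏ i ∈ Z, W j i)
    (hW'jj : ∀ j ∉ Z, ∀ j' ∉ Z, W' j j' = W j j')
    (hW'zz : W' z z = 1) :
    wPreferredIn W Finset.univ Z ↔
      wPreferredIn W' (insert z (Finset.univ \ Z)) {z} := by
  have key := aux_key W habs Z hcf z hz W' hW'zj hW'jz hW'jj hW'zz
  constructor
  · rintro ⟨hadm, hmax⟩
    have h0 := (key ∅ (by simp)).1 (by simpa using hadm)
    refine ⟨by simpa using h0, ?_⟩
    intro C' hC' hzC'
    have hzC : z ∈ C' := hzC' (Finset.mem_singleton_self z)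
    set D := C'.erase z with hDdef
    have hDZ : ∀ d ∈ D, d ∉ Z := by
      intro d hd
      have hdz : d ≠ z := Finset.ne_of_mem_erase hd
      have hdC : d ∈ C' := Finset.mem_of_mem_erase hd
      have := hC'.1 hdC
      rcases Finset.mem_insert.1 this with h | h
      · exact absurd h hdz
      · exact (Finset.mem_sdiff.1 h).2
    have hC'eq : insert z D = C' := Finset.insert_erase hzC
    have hadmD := (key D hDZ).2 (by rw [hC'eq]; exact hC')
    have hZD := hmax (Z ∪ D) hadmD Finset.subset_union_left
    have hD : D = ∅ := by
      ext d
      simp only [Finset.notMem_empty, iff_false]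
      intro hd
      exact hDZ d hd (hZD ▸ Finset.mem_union_right Z hd)
    rw [← hC'eq, hD]
    simp
  · rintro ⟨hadm', hmax'⟩
    have h0 := (key ∅ (by simp)).2 (by simpa using hadm')
    refine ⟨by simpa using h0, ?_⟩
    intro C hC hZC
    set D := C \ Z with hDdef
    have hDZ : ∀ d ∈ D, d ∉ Z := fun d hd => (Finset.mem_sdiff.1 hd).2
    have hCeq : Z ∪ D = C := Finset.union_sdiff_of_subset hZC
    have hadmD := (key D hDZ).1 (by rw [hCeq]; exact hC)
    have h1 := hmax' (insert z D) hadmD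
      (Finset.singleton_subset_iff.2 (Finset.mem_insert_self _ _))
    have hD : D = ∅ := by
      ext d
      simp only [Finset.notMem_empty, iff_false]
      intro hd
      have : d ∈ ({z} : Finset A) := h1 ▸ Finset.mem_insert_of_mem hd
      exact hDZ d hd ((Finset.mem_singleton.1 this) ▸ hz)
    rw [← hCeq, hD, Finset.union_empty]
end
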